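/- Let ρ = 1/2 + iγ, with γ > 0, be a zero of ζ(s). Then there exists δ > 0 such that for all real v with 0 < |v − γ| < δ one has η(1/2 + iv) ≠ 0 and Im η(1/2 + iv) ≠ 0, and moreover Re η(1/2 + iv) / Im η(1/2 + iv) → 0 as v → γ (both as v → γ from above and from below). Equivalently, the one-sided limits lim_{v→γ⁺} arg η(1/2+iv) and lim_{v→γ⁻} arg η(1/2+iv) are both congruent to π/2 modulo π. -/

import Mathlib

open Complex Filter Topology

/-- The function `η(s) = π^{-s/2} Γ(s/2) ζ'(s)`. -/
noncomputable def etaFun (s : ℂ) : ℂ :=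
  (Real.pi : ℂ) ^ (-s/2) * Complex.Gamma (s/2) * deriv riemannZeta s

/-- `F(t) = -Re (η'/η)(1/2+it)` (junk value where `η(1/2+it) = 0`). -/
noncomputable def F (t : ℝ) : ℝ :=
  -(deriv etaFun (1/2 + t * I) / etaFun (1/2 + t * I)).re

lemma line_re (v : ℝ) : (1/2 + v*I : ℂ).re = 1/2 := by simp

lemma line_ne_zero (v : ℝ) : (1/2 + v*I : ℂ) ≠ 0 := by
  intro h; have := line_re v; rw [h] at this; norm_num at this

lemma line_ne_one (v : ℝ) : (1/2 + v*I : ℂ) ≠ 1 := by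
  intro h; have := line_re v; rw [h] at this; norm_num at this

lemma hasDerivAt_conj_conj {f : ℂ → ℂ} {d z : ℂ}
    (hf : HasDerivAt f d ((starRingEnd ℂ) z)) :
    HasDerivAt (fun w => (starRingEnd ℂ) (f ((starRingEnd ℂ) w))) ((starRingEnd ℂ) d) z := by
  have hconj : ∀ x : ℂ, HasFDerivAt (fun w : ℂ => (starRingEnd ℂ) w)
      (Complex.conjCLE.toContinuousLinearMap : ℂ →L[ℝ] ℂ) x := fun x =>
    Complex.conjCLE.hasFDerivAt
  have inner : HasFDerivAt (fun w : ℂ => f ((starRingEnd ℂ) w))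
      (((ContinuousLinearMap.smulRight (1 : ℂ →L[ℂ] ℂ) d).restrictScalars ℝ).comp
        Complex.conjCLE.toContinuousLinearMap) z :=
    (hf.hasFDerivAt.restrictScalars ℝ).comp z (hconj z)
  have outer : HasFDerivAt (fun w : ℂ => (starRingEnd ℂ) (f ((starRingEnd ℂ) w)))
      ((Complex.conjCLE.toContinuousLinearMap).comp
        (((ContinuousLinearMap.smulRight (1 : ℂ →L[ℂ] ℂ) d).restrictScalars ℝ).comp
          Complex.conjCLE.toContinuousLinearMap)) z :=
    (hconj _).comp z inner
  rw [hasDerivAt_iff_hasFDerivAt]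
  refine hasFDerivAt_of_restrictScalars ℝ outer ?_
  ext x
  simp [mul_comm]

lemma lambda_ofReal_real {x : ℝ} (hx : 1 < x) :
    (starRingEnd ℂ) (completedRiemannZeta (x:ℂ)) = completedRiemannZeta (x:ℂ) := by
  have h : completedRiemannZeta (x:ℂ) =
      ((Real.pi ^ (-x/2) * Real.Gamma (x/2) * ∑' n : ℕ, 1 / (n:ℝ) ^ x : ℝ) : ℂ) := by
    rw [completedZeta_eq_tsum_of_one_lt_re (by simpa using hx)]
    push_cast [Complex.ofReal_cpow Real.pi_pos.le, Complex.ofReal_tsum]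
    rw [show ((x:ℂ)/2) = ((x/2 : ℝ) : ℂ) by push_cast; ring, Complex.Gamma_ofReal]
    congr 1
    refine tsum_congr fun n => ?_
    rcases eq_or_ne n 0 with rfl | hn
    · simp [Real.zero_rpow (by positivity : x ≠ 0),
        Complex.zero_cpow (by exact_mod_cast (by positivity : (x:ℝ) ≠ 0) : (x:ℂ) ≠ 0)]
    · rw [← Complex.ofReal_natCast, ← Complex.ofReal_cpow (Nat.cast_nonneg n)]
  rw [h, Complex.conj_ofReal]

lemma U_open : IsOpen ({0,1}ᶜ : Set ℂ) := by
  simp only [Set.compl_eq_univ_diff]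
  exact isOpen_univ.sdiff (((Set.finite_singleton _).insert _)).isClosed

lemma U_conn : IsPreconnected ({0,1}ᶜ : Set ℂ) := by
  refine (Set.Countable.isConnected_compl_of_one_lt_rank ?_ ?_).isPreconnected
  · rw [rank_real_complex]; exact Nat.one_lt_ofNat
  · exact (Set.countable_singleton _).insert _

lemma mem_U {s : ℂ} (h0 : s ≠ 0) (h1 : s ≠ 1) : s ∈ ({0,1}ᶜ : Set ℂ) := by
  simp [h0, h1]

lemma lambda_analyticOnNhd : AnalyticOnNhd ℂ completedRiemannZeta ({0,1}ᶜ : Set ℂ) := by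
  refine DifferentiableOn.analyticOnNhd (fun s hs => ?_) U_open
  simp only [Set.mem_compl_iff, Set.mem_insert_iff, Set.mem_singleton_iff, not_or] at hs
  exact (differentiableAt_completedZeta hs.1 hs.2).differentiableWithinAt

lemma conj_lambda {s : ℂ} (h0 : s ≠ 0) (h1 : s ≠ 1) :
    completedRiemannZeta ((starRingEnd ℂ) s) = (starRingEnd ℂ) (completedRiemannZeta s) := by
  have key : Set.EqOn (fun z => (starRingEnd ℂ) (completedRiemannZeta ((starRingEnd ℂ) z)))
      completedRiemannZeta ({0,1}ᶜ : Set ℂ) := by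
    refine AnalyticOnNhd.eqOn_of_preconnected_of_frequently_eq ?_ lambda_analyticOnNhd
      U_conn (mem_U (by norm_num) (by norm_num) : (2:ℂ) ∈ _) ?_
    · refine DifferentiableOn.analyticOnNhd (fun z hz => ?_) U_open
      simp only [Set.mem_compl_iff, Set.mem_insert_iff, Set.mem_singleton_iff, not_or] at hz
      have hz0 : (starRingEnd ℂ) z ≠ 0 := by
        simpa [map_eq_zero] using hz.1
      have hz1 : (starRingEnd ℂ) z ≠ 1 := by
        intro h; apply hz.2
        have := congrArg (starRingEnd ℂ) h
        simpa using this
      exact (hasDerivAt_conj_conj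
        (differentiableAt_completedZeta hz0 hz1).hasDerivAt).differentiableAt.differentiableWithinAt
    · have htend : Tendsto (fun n : ℕ => ((2 + 1/(n+1) : ℝ) : ℂ)) atTop (𝓝[≠] (2:ℂ)) := by
        rw [tendsto_nhdsWithin_iff]
        constructor
        · have : Tendsto (fun n : ℕ => (2 + 1/(n+1) : ℝ)) atTop (𝓝 2) := by
            simpa using tendsto_const_nhds.add (tendsto_one_div_add_atTop_nhds_zero_nat (𝕜 := ℝ))
          have h2 := (continuous_ofReal.tendsto 2).comp this
          simp only [Function.comp_def] at h2
          convert h2 using 2 <;> push_cast <;> ring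
        · filter_upwards with n
          simp only [Set.mem_compl_iff, Set.mem_singleton_iff]
          intro h
          have : (2 + 1/(n+1) : ℝ) = 2 := by exact_mod_cast h
          have hpos : (0:ℝ) < 1/(n+1) := by positivity
          linarith
      refine htend.frequently (Filter.Frequently.of_forall fun n => ?_)
      have hx : (1:ℝ) < 2 + 1/(n+1) := by
        have hpos : (0:ℝ) < 1/(n+1) := by positivity
        linarith
      simp only [conj_ofReal]
      exact lambda_ofReal_real hx
  have hs : s ∈ ({0,1}ᶜ : Set ℂ) := mem_U h0 h1
  have := key hs
  simp only at this
  rw [← this]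
  simp

lemma lambda_line_real (v : ℝ) : (completedRiemannZeta (1/2 + v*I : ℂ)).im = 0 := by
  set s : ℂ := 1/2 + v*I with hs
  have hconj : (starRingEnd ℂ) s = 1 - s := by
    rw [hs]; simp [Complex.ext_iff]; ring
  have := conj_lambda (line_ne_zero v) (line_ne_one v)
  rw [hconj, completedRiemannZeta_one_sub] at this
  exact Complex.conj_eq_iff_im.mp this.symm

lemma lambda_not_eventually_zero {ρ : ℂ} (h0 : ρ ≠ 0) (h1 : ρ ≠ 1) :
    ¬ (∀ᶠ z in 𝓝 ρ, completedRiemannZeta z = 0) := by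
  intro hev
  have := lambda_analyticOnNhd.eqOn_zero_of_preconnected_of_eventuallyEq_zero U_conn
    (mem_U h0 h1) hev (mem_U (by norm_num) (by norm_num) : (2:ℂ) ∈ _)
  have hζ : riemannZeta 2 = 0 := by
    rw [riemannZeta_def_of_ne_zero (by norm_num), this]
    simp
  exact riemannZeta_ne_zero_of_one_lt_re (by norm_num) hζ

lemma differentiableAt_GammaR {s : ℂ} (hs : 0 < s.re) : DifferentiableAt ℂ Complex.Gammaℝ s := by
  have h1 : DifferentiableAt ℂ (fun z : ℂ => (Real.pi:ℂ) ^ (-z/2)) s :=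
    (differentiableAt_id.neg.div_const 2).const_cpow
      (Or.inl (by exact_mod_cast Real.pi_ne_zero))
  have h2 : DifferentiableAt ℂ (fun z : ℂ => Complex.Gamma (z/2)) s := by
    refine (Complex.differentiableAt_Gamma (s/2) fun m => ?_).comp s
      (differentiableAt_id.div_const 2)
    intro h
    have hs2 : s = -(m:ℂ) * 2 := by
      have := congrArg (fun z : ℂ => z * 2) h
      simpa [div_mul_cancel₀] using this
    rw [hs2] at hs
    simp at hs
    have : (0:ℝ) ≤ (m:ℝ) * 2 := by positivity
    linarith
  have heq : Complex.Gammaℝ = fun z : ℂ => (Real.pi:ℂ) ^ (-z/2) * Complex.Gamma (z/2) :=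
    funext Complex.Gammaℝ_def
  rw [heq]
  exact h1.mul h2

lemma GammaR_line_ne_zero (v : ℝ) : Complex.Gammaℝ (1/2 + v*I) ≠ 0 :=
  Complex.Gammaℝ_ne_zero_of_re_pos (by rw [line_re]; norm_num)

lemma hasDerivAt_line {f : ℂ → ℂ} {d : ℂ} {v : ℝ} (hf : HasDerivAt f d (1/2 + v*I)) :
    HasDerivAt (fun t : ℝ => f (1/2 + t*I)) (I * d) v := by
  have hc : HasDerivAt (fun t : ℝ => (1/2 + t*I : ℂ)) I v := by
    simpa using (((hasDerivAt_id v).ofReal_comp).mul_const I).const_add (1/2 : ℂ)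
  have h2 := (hf.hasFDerivAt.restrictScalars ℝ).comp_hasDerivAt v hc
  simpa [smul_eq_mul, mul_comm, Function.comp_def] using h2

lemma eta_eq_line (v : ℝ) :
    etaFun (1/2 + v*I) = deriv completedRiemannZeta (1/2 + v*I)
      - (deriv Complex.Gammaℝ (1/2 + v*I) / Complex.Gammaℝ (1/2 + v*I))
        * completedRiemannZeta (1/2 + v*I) := by
  have hG : Complex.Gammaℝ (1/2 + v*I) ≠ 0 := GammaR_line_ne_zero v
  have hGd : DifferentiableAt ℂ Complex.Gammaℝ (1/2 + v*I) :=
    differentiableAt_GammaR (by rw [line_re]; norm_num)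
  have hΛd : DifferentiableAt ℂ completedRiemannZeta (1/2 + v*I) :=
    differentiableAt_completedZeta (line_ne_zero v) (line_ne_one v)
  have hev : riemannZeta =ᶠ[𝓝 (1/2 + v*I : ℂ)]
      fun z => completedRiemannZeta z / Complex.Gammaℝ z := by
    filter_upwards [isOpen_compl_singleton.mem_nhds
      (by exact line_ne_zero v : (1/2 + v*I : ℂ) ∈ ({0}ᶜ : Set ℂ))] with z hz
    exact riemannZeta_def_of_ne_zero hz
  have heta : etaFun (1/2 + v*I) = Complex.Gammaℝ (1/2 + v*I) * deriv riemannZeta (1/2 + v*I) := by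
    rw [etaFun, Complex.Gammaℝ_def]
  have key : ∀ a b c d : ℂ, d ≠ 0 → d * ((a * d - b * c) / d ^ 2) = a - c / d * b := by
    intros a b c d hd
    field_simp
  rw [heta, hev.deriv_eq, deriv_fun_div hΛd hGd hG]
  exact key _ _ _ _ hG

noncomputable def Phi : ℝ → ℂ := fun v => completedRiemannZeta (1/2 + v*I)

noncomputable def psiF (n : ℕ) (h : ℂ → ℂ) : ℝ → ℂ := fun v => (Complex.I)^(n+1) * h (1/2 + v*I)

noncomputable def chiF (n : ℕ) (h : ℂ → ℂ) : ℝ → ℂ := fun v => (Complex.I)^(n+2) * deriv h (1/2 + v*I)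

noncomputable def gF : ℝ → ℂ :=
  fun v => deriv Complex.Gammaℝ (1/2 + v*I) / Complex.Gammaℝ (1/2 + v*I)

noncomputable def BF (γ : ℝ) (n : ℕ) (h : ℂ → ℂ) : ℝ → ℝ := fun v =>
  (n+1 : ℝ) * (psiF n h v).re + (v - γ) * ((chiF n h v).re + (gF v).im * (psiF n h v).re)

lemma line_continuous : Continuous (fun v : ℝ => (1/2 + v*I : ℂ)) :=
  continuous_const.add (Complex.continuous_ofReal.mul continuous_const)

lemma Phi_hasDerivAt (v : ℝ) :
    HasDerivAt Phi (I * deriv completedRiemannZeta (1/2 + v*I)) v :=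
  hasDerivAt_line (differentiableAt_completedZeta (line_ne_zero v) (line_ne_one v)).hasDerivAt

lemma Phi_im (v : ℝ) : (Phi v).im = 0 := lambda_line_real v

lemma deriv_Phi_im (v : ℝ) : (deriv Phi v).im = 0 := by
  have h1 := Phi_hasDerivAt v
  have h2 : HasDerivAt (fun t => (Phi t).im)
      ((I * deriv completedRiemannZeta (1/2 + v*I)).im) v := by
    have := Complex.imCLM.hasFDerivAt.comp_hasDerivAt v h1
    simpa [Function.comp_def] using this
  have h3 : HasDerivAt (fun t => (Phi t).im) 0 v := by
    have hfe : (fun t => (Phi t).im) = fun _ => (0:ℝ) := funext Phi_im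
    rw [hfe]
    exact hasDerivAt_const v 0
  rw [h1.deriv]
  exact h2.unique h3

lemma eta_line_eq (v : ℝ) : etaFun (1/2 + v*I) = -I * deriv Phi v - gF v * Phi v := by
  rw [eta_eq_line v, (Phi_hasDerivAt v).deriv]
  have hkey : -I * (I * deriv completedRiemannZeta (1/2 + v*I))
      = deriv completedRiemannZeta (1/2 + v*I) := by
    rw [← mul_assoc]
    simp
  rw [hkey]
  rfl

lemma eta_line_re (v : ℝ) : (etaFun (1/2 + v*I)).re = -((gF v).re * (Phi v).re) := by
  rw [eta_line_eq]
  simp [Complex.sub_re, Complex.mul_re, Complex.neg_re, Complex.neg_im,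
    Complex.I_re, Complex.I_im, Phi_im, deriv_Phi_im]

lemma eta_line_im (v : ℝ) :
    (etaFun (1/2 + v*I)).im = -(deriv Phi v).re - (gF v).im * (Phi v).re := by
  rw [eta_line_eq]
  simp [Complex.sub_im, Complex.mul_im, Complex.mul_re, Complex.neg_re, Complex.neg_im,
    Complex.I_re, Complex.I_im, Phi_im, deriv_Phi_im]

lemma gF_contAt (v : ℝ) : ContinuousAt gF v := by
  have hW : IsOpen {s : ℂ | 0 < s.re} := isOpen_lt continuous_const Complex.continuous_re
  have hana : AnalyticOnNhd ℂ Complex.Gammaℝ {s : ℂ | 0 < s.re} :=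
    DifferentiableOn.analyticOnNhd
      (fun z hz => (differentiableAt_GammaR hz).differentiableWithinAt) hW
  have hmem : (1/2 + v*I : ℂ) ∈ {s : ℂ | 0 < s.re} := by
    rw [Set.mem_setOf_eq, line_re]; norm_num
  have h1 : ContinuousAt (deriv Complex.Gammaℝ) (1/2 + v*I) :=
    ((hana.deriv) _ hmem).continuousAt
  have h2 : ContinuousAt Complex.Gammaℝ (1/2 + v*I) :=
    (differentiableAt_GammaR (by rw [line_re]; norm_num)).continuousAt
  have hline : ContinuousAt (fun t : ℝ => (1/2 + t*I : ℂ)) v := line_continuous.continuousAt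
  have hc1 : ContinuousAt (fun t : ℝ => deriv Complex.Gammaℝ (1/2 + t*I)) v := Filter.Tendsto.comp h1 hline
  have hc2 : ContinuousAt (fun t : ℝ => Complex.Gammaℝ (1/2 + t*I)) v := Filter.Tendsto.comp h2 hline
  exact hc1.div hc2 (GammaR_line_ne_zero v)

lemma aux_main (γ : ℝ) (n : ℕ) (h : ℂ → ℂ) (hh : AnalyticAt ℂ h (1/2 + γ*I))
    (hhρ : h (1/2 + γ*I) ≠ 0)
    (heq : ∀ᶠ z in 𝓝 (1/2 + γ*I : ℂ),
      completedRiemannZeta z = (z - (1/2 + γ*I))^(n+1) • h z) :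
    ∃ δ > 0,
      (∀ v : ℝ, 0 < |v - γ| → |v - γ| < δ →
        etaFun (1/2 + v * I) ≠ 0 ∧ (etaFun (1/2 + v * I)).im ≠ 0) ∧
      Filter.Tendsto (fun v : ℝ => (etaFun (1/2 + v * I)).re / (etaFun (1/2 + v * I)).im)
        (nhdsWithin γ {γ}ᶜ) (nhds 0) := by
  have hc_tend : Tendsto (fun v : ℝ => (1/2 + v*I : ℂ)) (𝓝 γ) (𝓝 (1/2 + γ*I)) :=
    line_continuous.continuousAt
  -- eventual factorization along the line
  have E1 : ∀ᶠ v in 𝓝 γ, Phi v = (((v - γ)^(n+1) : ℝ) : ℂ) * psiF n h v := by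
    filter_upwards [hc_tend.eventually heq] with v hv
    have hsub : (1/2 + v*I : ℂ) - (1/2 + γ*I) = ((v - γ : ℝ) : ℂ) * I := by
      push_cast; ring
    show completedRiemannZeta (1/2 + v*I) = _
    rw [hv, hsub, smul_eq_mul]
    show _ = _ * ((Complex.I)^(n+1) * h (1/2 + v*I))
    rw [mul_pow]
    push_cast
    ring
  have E2 : ∀ᶠ (v : ℝ) in 𝓝 γ, AnalyticAt ℂ h (1/2 + v*I) :=
    hc_tend.eventually hh.eventually_analyticAt
  have E3 : ∀ᶠ v in 𝓝 γ, deriv Phi v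
      = ((((n:ℝ)+1) * (v - γ)^n : ℝ) : ℂ) * psiF n h v
        + (((v - γ)^(n+1) : ℝ) : ℂ) * chiF n h v := by
    have E1' : Phi =ᶠ[𝓝 γ] fun v => (((v - γ)^(n+1) : ℝ) : ℂ) * psiF n h v := E1
    filter_upwards [E1'.deriv, E2] with v hv hva
    rw [hv]
    have hr : HasDerivAt (fun t : ℝ => (((t - γ)^(n+1) : ℝ) : ℂ))
        ((((n:ℝ)+1) * (v-γ)^n : ℝ) : ℂ) v := by
      have hr0 : HasDerivAt (fun t : ℝ => ((t - γ)^(n+1) : ℝ)) (((n:ℝ)+1) * (v-γ)^n) v := by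
        have := ((hasDerivAt_id v).sub_const γ).fun_pow (n+1)
        simpa using this
      exact hr0.ofReal_comp
    have hψd : HasDerivAt (psiF n h) (chiF n h v) v := by
      have h2 := hasDerivAt_line hva.differentiableAt.hasDerivAt
      have h3 := h2.const_mul ((Complex.I)^(n+1))
      have h4 : (Complex.I)^(n+1) * (I * deriv h (1/2 + v*I)) = chiF n h v := by
        show _ = (Complex.I)^(n+2) * deriv h (1/2 + v*I)
        rw [pow_succ]
        ring
      rw [h4] at h3
      exact h3
    exact (hr.mul hψd).deriv
  -- continuity facts
  have hψcont : ContinuousAt (psiF n h) γ :=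
    continuousAt_const.mul (Filter.Tendsto.comp hh.continuousAt hc_tend)
  have hχcont : ContinuousAt (chiF n h) γ := by
    obtain ⟨V, hV1, hV2, hV3⟩ := eventually_nhds_iff.mp hh.eventually_analyticAt
    have hana : AnalyticOnNhd ℂ h V := fun z hz => hV1 z hz
    exact continuousAt_const.mul
      (Filter.Tendsto.comp ((hana.deriv _ hV3).continuousAt) hc_tend)
  have hψre : ContinuousAt (fun v => (psiF n h v).re) γ :=
    Filter.Tendsto.comp Complex.continuous_re.continuousAt hψcont
  have hχre : ContinuousAt (fun v => (chiF n h v).re) γ :=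
    Filter.Tendsto.comp Complex.continuous_re.continuousAt hχcont
  have hgre : ContinuousAt (fun v => (gF v).re) γ :=
    Filter.Tendsto.comp Complex.continuous_re.continuousAt (gF_contAt γ)
  have hgim : ContinuousAt (fun v => (gF v).im) γ :=
    Filter.Tendsto.comp Complex.continuous_im.continuousAt (gF_contAt γ)
  have hBcont : ContinuousAt (BF γ n h) γ :=
    (continuousAt_const.mul hψre).add
      ((continuousAt_id.sub continuousAt_const).mul (hχre.add (hgim.mul hψre)))
  -- ψ at γ : real and nonzero
  have hψγ : psiF n h γ ≠ 0 := mul_ne_zero (pow_ne_zero _ I_ne_zero) hhρ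
  have hψγim : (psiF n h γ).im = 0 := by
    have hev0 : (fun v => (psiF n h v).im) =ᶠ[𝓝[≠] γ] fun _ => (0:ℝ) := by
      filter_upwards [eventually_nhdsWithin_of_eventually_nhds E1, self_mem_nhdsWithin]
        with v hv hne
      have h2 := congrArg Complex.im hv
      rw [Phi_im v, Complex.im_ofReal_mul] at h2
      have hr : ((v - γ)^(n+1) : ℝ) ≠ 0 :=
        pow_ne_zero _ (sub_ne_zero.mpr (by simpa using hne))
      exact (mul_eq_zero.mp h2.symm).resolve_left hr
    have t1c : ContinuousAt (fun v => (psiF n h v).im) γ :=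
      Filter.Tendsto.comp Complex.continuous_im.continuousAt hψcont
    have t1 : Tendsto (fun v => (psiF n h v).im) (𝓝[≠] γ) (𝓝 ((psiF n h γ).im)) :=
      t1c.continuousWithinAt
    have t2 : Tendsto (fun v => (psiF n h v).im) (𝓝[≠] γ) (𝓝 0) :=
      tendsto_const_nhds.congr' hev0.symm
    exact tendsto_nhds_unique t1 t2
  have hψγre : (psiF n h γ).re ≠ 0 := by
    intro h0
    exact hψγ (Complex.ext h0 hψγim)
  have hBγ : BF γ n h γ ≠ 0 := by
    have hBγeq : BF γ n h γ = ((n:ℝ)+1) * (psiF n h γ).re := by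
      show ((n:ℝ)+1) * _ + (γ - γ) * _ = _
      ring
    rw [hBγeq]
    exact mul_ne_zero (by positivity) hψγre
  have hBev : ∀ᶠ v in 𝓝 γ, BF γ n h v ≠ 0 := hBcont.eventually_ne hBγ
  -- key pointwise formulas
  have keyRe : ∀ v : ℝ, Phi v = (((v - γ)^(n+1) : ℝ) : ℂ) * psiF n h v →
      (etaFun (1/2 + v * I)).re
        = -((v-γ)^n * ((v - γ) * (gF v).re * (psiF n h v).re)) := by
    intro v h1
    rw [eta_line_re v, h1]
    rw [Complex.re_ofReal_mul]
    rw [pow_succ]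
    ring
  have keyIm : ∀ v : ℝ,
      Phi v = (((v - γ)^(n+1) : ℝ) : ℂ) * psiF n h v →
      deriv Phi v = ((((n:ℝ)+1) * (v - γ)^n : ℝ) : ℂ) * psiF n h v
        + (((v - γ)^(n+1) : ℝ) : ℂ) * chiF n h v →
      (etaFun (1/2 + v * I)).im = -((v-γ)^n * BF γ n h v) := by
    intro v h1 h2
    rw [eta_line_im v, h1, h2]
    rw [Complex.add_re, Complex.re_ofReal_mul, Complex.re_ofReal_mul, Complex.re_ofReal_mul]
    show _ = -((v-γ)^n * (((n:ℝ)+1) * (psiF n h v).re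
      + (v - γ) * ((chiF n h v).re + (gF v).im * (psiF n h v).re)))
    rw [pow_succ]
    ring
  -- extract δ
  obtain ⟨δ, hδpos, hδ⟩ := Metric.eventually_nhds_iff.mp (E1.and (E3.and hBev))
  refine ⟨δ, hδpos, fun v h1 h2 => ?_, ?_⟩
  · have hP := hδ (show dist v γ < δ by rw [Real.dist_eq]; exact h2)
    have hne : v - γ ≠ 0 := by
      intro h0; rw [h0] at h1; simp at h1
    have hImeq := keyIm v hP.1 hP.2.1
    have hImne : (etaFun (1/2 + v * I)).im ≠ 0 := by
      rw [hImeq]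
      exact neg_ne_zero.mpr (mul_ne_zero (pow_ne_zero _ hne) hP.2.2)
    exact ⟨fun h0 => hImne (by rw [h0]; simp), hImne⟩
  · have hTc : ContinuousAt
        (fun v => ((v - γ) * (gF v).re * (psiF n h v).re) / BF γ n h v) γ :=
      (((continuousAt_id.sub continuousAt_const).mul hgre).mul hψre).div hBcont hBγ
    have h0 : ((γ - γ) * (gF γ).re * (psiF n h γ).re) / BF γ n h γ = 0 := by simp
    have hT : Tendsto (fun v => ((v - γ) * (gF v).re * (psiF n h v).re) / BF γ n h v)
        (𝓝 γ) (𝓝 0) := h0 ▸ hTc.tendsto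
    refine (hT.mono_left nhdsWithin_le_nhds).congr' ?_
    filter_upwards [eventually_nhdsWithin_of_eventually_nhds (E1.and (E3.and hBev)),
      self_mem_nhdsWithin] with v hP hne'
    have hne : v - γ ≠ 0 := sub_ne_zero.mpr (by simpa using hne')
    rw [keyRe v hP.1, keyIm v hP.1 hP.2.1, neg_div_neg_eq,
      mul_div_mul_left _ _ (pow_ne_zero n hne)]

/-- Let `ρ = 1/2 + iγ`, `γ > 0`, be a zero of `ζ`. Then near (but not at) `γ` one has
`η(1/2+iv) ≠ 0` and `Im η(1/2+iv) ≠ 0`, and `Re η(1/2+iv)/Im η(1/2+iv) → 0` as `v → γ`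
(from either side); i.e. the one-sided limits of `arg η(1/2+iv)` are `≡ π/2 (mod π)`. -/
theorem arg_eta_near_zero (γ : ℝ) (hγ : 0 < γ)
    (hz : riemannZeta (1/2 + γ * I) = 0) :
    ∃ δ > 0,
      (∀ v : ℝ, 0 < |v - γ| → |v - γ| < δ →
        etaFun (1/2 + v * I) ≠ 0 ∧ (etaFun (1/2 + v * I)).im ≠ 0) ∧
      Filter.Tendsto (fun v : ℝ => (etaFun (1/2 + v * I)).re / (etaFun (1/2 + v * I)).im)
        (nhdsWithin γ {γ}ᶜ) (nhds 0) := by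
  have hρ0 : (1/2 + γ*I : ℂ) ≠ 0 := line_ne_zero γ
  have hρ1 : (1/2 + γ*I : ℂ) ≠ 1 := line_ne_one γ
  have hΛρ : completedRiemannZeta (1/2 + γ*I) = 0 := by
    have hd := riemannZeta_def_of_ne_zero hρ0
    rw [hz] at hd
    exact (div_eq_zero_iff.mp hd.symm).resolve_right (GammaR_line_ne_zero γ)
  have hA : AnalyticAt ℂ completedRiemannZeta (1/2 + γ*I) :=
    lambda_analyticOnNhd _ (mem_U hρ0 hρ1)
  have hordne : analyticOrderAt completedRiemannZeta (1/2 + γ*I) ≠ ⊤ := by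
    intro htop
    exact lambda_not_eventually_zero hρ0 hρ1 (analyticOrderAt_eq_top.mp htop)
  obtain ⟨m, hm⟩ := WithTop.ne_top_iff_exists.mp hordne
  obtain ⟨h, hh, hhρ, heq⟩ := (hA.analyticOrderAt_eq_natCast (n := m)).mp hm.symm
  have hm0 : m ≠ 0 := by
    rintro rfl
    apply hhρ
    have h0 := heq.self_of_nhds
    rw [sub_self, pow_zero, one_smul, hΛρ] at h0
    exact h0.symm
  obtain ⟨n, rfl⟩ : ∃ n, m = n + 1 :=
    ⟨m - 1, (Nat.succ_pred_eq_of_pos (Nat.pos_of_ne_zero hm0)).symm⟩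
  exact aux_main γ n h hh hhρ heq
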